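/- Fix an integer ρ with 4 ≤ ρ ≤ 10, let x⊙y = xᵀJ_ρy, D = (1,…,1), and E_1 = {n ∈ ℤ^ρ : n⊙n = 1 and n⊙D < 0}. Then for every i ∈ {1,…,ρ}, the hyperplane H_{e_i} is a face of K_ρ = ∩_{n ∈ E_1}{x : n⊙x ≤ 0}; precisely, there exists x ∈ ℝ^ρ with x⊙x = −1, x⊙D < 0, e_i⊙x = 0, and n⊙x < 0 for every n ∈ E_1 with n ≠ e_i. (In particular each e_i ∈ E_1, and the Apollonian configuration contains the cluster of ρ mutually tangent hyperspheres e_1,…,e_ρ.) -/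

import Mathlib

/-- The Lorentz product over `ℝ`, given by the matrix `J_ρ` with diagonal
entries `1` and off-diagonal entries `-1`. -/
noncomputable def lor {ρ : ℕ} (x y : Fin ρ → ℝ) : ℝ :=
  ∑ i, ∑ j, x i * (if i = j then (1 : ℝ) else -1) * y j

/-- The Lorentz product over `ℤ`. -/
def lorZ {ρ : ℕ} (x y : Fin ρ → ℤ) : ℤ :=
  ∑ i, ∑ j, x i * (if i = j then (1 : ℤ) else -1) * y j


lemma lor_eq {ρ : ℕ} (x y : Fin ρ → ℝ) :
    lor x y = 2 * ∑ t, x t * y t - (∑ t, x t) * (∑ t, y t) := by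
  unfold lor
  calc ∑ t, ∑ j, x t * (if t = j then (1:ℝ) else -1) * y j
      = ∑ t, ∑ j, (2 * (if t = j then x t * y j else 0) - x t * y j) := by
        refine Finset.sum_congr rfl fun t _ => Finset.sum_congr rfl fun j _ => ?_
        split <;> ring
    _ = ∑ t, (2 * (x t * y t) - x t * ∑ j, y j) := by
        refine Finset.sum_congr rfl fun t _ => ?_
        rw [Finset.sum_sub_distrib, ← Finset.mul_sum,
          Finset.sum_ite_eq, if_pos (Finset.mem_univ t), ← Finset.mul_sum]
    _ = 2 * ∑ t, x t * y t - (∑ t, x t) * (∑ t, y t) := by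
        rw [Finset.sum_sub_distrib, ← Finset.mul_sum, ← Finset.sum_mul]

lemma lorZ_eq {ρ : ℕ} (x y : Fin ρ → ℤ) :
    lorZ x y = 2 * ∑ t, x t * y t - (∑ t, x t) * (∑ t, y t) := by
  unfold lorZ
  calc ∑ t, ∑ j, x t * (if t = j then (1:ℤ) else -1) * y j
      = ∑ t, ∑ j, (2 * (if t = j then x t * y j else 0) - x t * y j) := by
        refine Finset.sum_congr rfl fun t _ => Finset.sum_congr rfl fun j _ => ?_
        split <;> ring
    _ = ∑ t, (2 * (x t * y t) - x t * ∑ j, y j) := by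
        refine Finset.sum_congr rfl fun t _ => ?_
        rw [Finset.sum_sub_distrib, ← Finset.mul_sum,
          Finset.sum_ite_eq, if_pos (Finset.mem_univ t), ← Finset.mul_sum]
    _ = 2 * ∑ t, x t * y t - (∑ t, x t) * (∑ t, y t) := by
        rw [Finset.sum_sub_distrib, ← Finset.mul_sum, ← Finset.sum_mul]

/-- For `4 ≤ ρ ≤ 10`, each standard basis vector `e_i` lies in
`E₁ = {n ∈ ℤ^ρ : n⊙n = 1, n⊙D < 0}` and the hyperplane `H_{e_i}` is a face of
the Apollonian polyhedron `K_ρ = ∩_{n ∈ E₁} {x : n⊙x ≤ 0}`: there is a point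
`x` of the hyperbolic sheet lying on `H_{e_i}` and strictly off every other
hyperplane `H_n` with `n ∈ E₁`. -/
theorem basis_vectors_are_faces (ρ : ℕ) (hρ₁ : 4 ≤ ρ) (hρ₂ : ρ ≤ 10)
    (i : Fin ρ) :
    (lorZ (Pi.single i 1) (Pi.single i 1) = 1 ∧
      lorZ (Pi.single i 1) (fun _ => 1) < 0) ∧
    ∃ x : Fin ρ → ℝ,
      lor x x = -1 ∧ lor x (fun _ => 1) < 0 ∧
      lor (fun t => ((Pi.single i 1 : Fin ρ → ℤ) t : ℝ)) x = 0 ∧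
      ∀ n : Fin ρ → ℤ, lorZ n n = 1 → lorZ n (fun _ => 1) < 0 →
        n ≠ Pi.single i 1 → lor (fun t => (n t : ℝ)) x < 0 := by
  have hρZ : (4:ℤ) ≤ (ρ:ℤ) := by exact_mod_cast hρ₁
  -- integer sums for e_i
  have hse : ∑ t, ((Pi.single i 1 : Fin ρ → ℤ)) t = 1 := by simp [Pi.single_apply]
  have hsee : ∑ t, ((Pi.single i 1 : Fin ρ → ℤ)) t * ((Pi.single i 1 : Fin ρ → ℤ)) t = 1 := by
    have h : ∀ t, ((Pi.single i 1 : Fin ρ → ℤ)) t * ((Pi.single i 1 : Fin ρ → ℤ)) t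
        = ((Pi.single i 1 : Fin ρ → ℤ)) t := by
      intro t; rw [Pi.single_apply]; split <;> simp [Pi.single_apply, *]
    simp_rw [h]; exact hse
  have honesZ : ∑ _t : Fin ρ, (1:ℤ) = (ρ:ℤ) := by simp
  refine ⟨⟨by rw [lorZ_eq, hsee, hse]; ring, ?_⟩, ?_⟩
  · rw [lorZ_eq]
    have h1 : ∑ t, ((Pi.single i 1 : Fin ρ → ℤ)) t * (fun _ => (1:ℤ)) t = 1 := by
      simpa using hse
    rw [h1, hse, honesZ]; linarith
  -- real part
  set r : ℝ := (ρ : ℝ) with hrdef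
  have hr : (4:ℝ) ≤ r := by rw [hrdef]; exact_mod_cast hρ₁
  have hcpos : (0:ℝ) < 2*(r-1)*(r-2) := by nlinarith
  set a : ℝ := Real.sqrt (1/(2*(r-1)*(r-2))) with hadef
  have ha : 0 < a := Real.sqrt_pos.mpr (by positivity)
  have ha2 : a * a = 1/(2*(r-1)*(r-2)) := Real.mul_self_sqrt (by positivity)
  -- the witness
  set x : Fin ρ → ℝ := fun j => if j = i then (r-1)*a else a with hxdef
  have hsum : ∀ b d : ℝ, ∑ j : Fin ρ, (if j = i then b else d) = b + (r-1)*d := by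
    intro b d
    have h : ∀ j : Fin ρ, (if j = i then b else d) = (if j = i then b - d else 0) + d := by
      intro j; split <;> ring
    simp_rw [h, Finset.sum_add_distrib, Finset.sum_ite_eq' Finset.univ i,
      if_pos (Finset.mem_univ i), Finset.sum_const, Finset.card_univ,
      Fintype.card_fin, nsmul_eq_mul]
    rw [hrdef]; ring
  have hsx : ∑ t, x t = 2*(r-1)*a := by
    rw [hxdef]; rw [hsum]; ring
  -- key formula: lor n x for any real n
  have key : ∀ n : Fin ρ → ℝ, lor n x = 2*a*(r-2)*(n i - ∑ t, n t) := by
    intro n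
    rw [lor_eq, hsx]
    have h1 : ∑ t, n t * x t = (∑ t, n t)*a + n i * ((r-2)*a) := by
      have h : ∀ t, n t * x t = n t * a + (if t = i then n t * ((r-2)*a) else 0) := by
        intro t; rw [hxdef]; dsimp only; split <;> ring
      simp_rw [h, Finset.sum_add_distrib, ← Finset.sum_mul,
        Finset.sum_ite_eq' Finset.univ i, if_pos (Finset.mem_univ i)]
    rw [h1]; ring
  have hxi : x i = (r-1)*a := by rw [hxdef]; simp
  refine ⟨x, ?_, ?_, ?_, ?_⟩
  · -- lor x x = -1
    rw [key x, hxi, hsx]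
    have : 2*a*(r-2)*((r-1)*a - 2*(r-1)*a) = -((2*(r-1)*(r-2))*(a*a)) := by ring
    rw [this, ha2]
    field_simp
    rw [div_self (ne_of_gt (by nlinarith : (0:ℝ) < (r-1)*(r-2)))]
  · -- lor x D < 0
    rw [lor_eq]
    have h1 : ∑ t, x t * (fun _ => (1:ℝ)) t = 2*(r-1)*a := by simpa using hsx
    have h2 : ∑ _t : Fin ρ, (1:ℝ) = r := by simp [hrdef]
    rw [h1, hsx, h2]
    nlinarith
  · -- lor e_i x = 0
    rw [key]
    have he : ∀ t, (((Pi.single i 1 : Fin ρ → ℤ)) t : ℝ) = if t = i then 1 else 0 := by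
      intro t; rw [Pi.single_apply]; split <;> simp
    have h1 : (((Pi.single i 1 : Fin ρ → ℤ)) i : ℝ) = 1 := by rw [he]; simp
    have h2 : ∑ t, (((Pi.single i 1 : Fin ρ → ℤ)) t : ℝ) = 1 := by
      simp_rw [he, hsum]; ring
    rw [h1, h2]; ring
  · -- other faces
    intro n hn1 hn2 hne
    rw [lorZ_eq] at hn1 hn2
    set s : ℤ := ∑ t, n t with hsdef
    have hn2' : 2*s - s*(ρ:ℤ) < 0 := by
      have h1 : ∑ t, n t * (fun _ => (1:ℤ)) t = s := by simp [hsdef]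
      rw [h1, honesZ] at hn2; exact hn2
    have hs : 0 < s := by nlinarith
    have hsq : n i * n i ≤ ∑ t, n t * n t :=
      Finset.single_le_sum (f := fun t => n t * n t)
        (fun t _ => mul_self_nonneg _) (Finset.mem_univ i)
    have hle : n i ≤ s := by
      by_contra h'
      push_neg at h'
      have h2 : s + 1 ≤ n i := h'
      have h3 : (s+1)*(s+1) ≤ n i * n i :=
        mul_le_mul h2 h2 (by linarith) (by linarith)
      nlinarith
    have hne' : n i ≠ s := by
      intro heq
      have hs1 : s = 1 := by nlinarith
      have hsumsq : ∑ t, n t * n t = 1 := by nlinarith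
      have hni1 : n i = 1 := by rw [heq, hs1]
      have hrest : ∑ t ∈ Finset.univ.erase i, n t * n t = 0 := by
        have h4 := Finset.add_sum_erase Finset.univ (fun t => n t * n t)
          (Finset.mem_univ i)
        rw [hsumsq, hni1] at h4
        linarith
      have hz := (Finset.sum_eq_zero_iff_of_nonneg
        (fun t _ => mul_self_nonneg (n t))).mp hrest
      apply hne
      funext t
      by_cases ht : t = i
      · subst ht; rw [hni1, Pi.single_eq_same]
      · rw [Pi.single_eq_of_ne ht]
        exact mul_self_eq_zero.mp (hz t (Finset.mem_erase.mpr ⟨ht, Finset.mem_univ t⟩))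
    have hlt : n i < s := lt_of_le_of_ne hle hne'
    have hc1 : ∑ t, ((n t : ℤ) : ℝ) = (s:ℝ) := by rw [hsdef]; push_cast; rfl
    have hc2 : ((n i : ℤ):ℝ) < (s:ℝ) := by exact_mod_cast hlt
    have hpos : 0 < 2*a*(r-2) :=
      mul_pos (mul_pos two_pos ha) (by linarith)
    calc lor (fun t => ((n t : ℤ):ℝ)) x
        = 2*a*(r-2)*(((n i : ℤ):ℝ) - ∑ t, ((n t : ℤ):ℝ)) := key _
      _ = 2*a*(r-2)*(((n i : ℤ):ℝ) - (s:ℝ)) := by rw [hc1]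
      _ < 0 := mul_neg_of_pos_of_neg hpos (by linarith)
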